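/- Let m ≥ 2 and let u, v be words with |c(u)| ≥ 2 and |c(v)| ≥ 2. If h_m(u) = h_m(v), then h_m(s(u)) = h_m(s(v)). (Equivalently, by the Gerhard–Petrich solution of the word problem for 𝒜_m: if the band variety 𝒜_m satisfies the identity u ≈ v, where both u and v contain at least two distinct letters, then 𝒜_m satisfies s(u) ≈ s(v).) -/

import Mathlib

/-! ### Words and word functions -/

/-- The word `w^{(i j)}`: replace every occurrence of the letter `i` by `j`. -/
def subst {X : Type*} [DecidableEq X] (w : List X) (i j : X) : List X :=
  w.map fun t => if t = i then j else t

/-- The prefix `s(w)`: the longest prefix of `w` containing all but one of the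
letters of `c(w)` (the empty word if `w` is empty). -/
def wordS {X : Type*} [DecidableEq X] (w : List X) : List X :=
  w.take (w.toFinset.sup fun x => w.idxOf x)

/-- The letter `σ(w)` (the last letter of `w` to occur from the left), as a word of
length at most one; `s(w) ++ σ(w)` is the shortest prefix of `w` with full content. -/
def wordSigma {X : Type*} [DecidableEq X] (w : List X) : List X :=
  (w.drop (w.toFinset.sup fun x => w.idxOf x)).take 1

/-- The suffix `e(w)`, dual to `s(w)`. -/
def wordE {X : Type*} [DecidableEq X] (w : List X) : List X :=
  (wordS w.reverse).reverse

/-- The letter `ε(w)` (as a word of length at most one), dual to `σ(w)`. -/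
def wordEps {X : Type*} [DecidableEq X] (w : List X) : List X :=
  (wordSigma w.reverse).reverse

/-- The initial part `i₂(w)`: retain only the first occurrence from the left of
each letter of `w`. -/
def initPart {X : Type*} [DecidableEq X] (w : List X) : List X :=
  w.reverse.dedup.reverse

/-- The dual `F̄` of a word function `F`: `F̄(w) = reverse (F (reverse w))`. -/
def dualW {X : Type*} (F : List X → List X) (w : List X) : List X :=
  (F w.reverse).reverse

theorem wordS_length_lt {X : Type*} [DecidableEq X] {w : List X} (hw : w ≠ []) :
    (wordS w).length < w.length := by
  have hpos : 0 < w.length := List.length_pos_iff.mpr hw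
  have hk : (w.toFinset.sup fun x => w.idxOf x) < w.length := by
    rw [Finset.sup_lt_iff hpos]
    intro x hx
    exact List.idxOf_lt_length_iff.mpr (List.mem_toFinset.mp hx)
  simp only [wordS, List.length_take]
  omega

/-- The common recursion defining the word functions `h_m` and `i_m` of Gerhard
and Petrich: `t_m(w) = t_m(s(w)) · σ(w) · t̄_{m-1}(w)` for `m ≥ 3`, where the base
function (`h₂` = first letter, `i₂` = initial part) is a parameter, and all
functions send the empty word to the empty word. -/
def tW {X : Type*} [DecidableEq X] (base : List X → List X) : ℕ → List X → List X
  | m, w =>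
    if hw : w = [] then []
    else if hm : m ≤ 2 then base w
    else tW base m (wordS w) ++ wordSigma w ++ (tW base (m - 1) w.reverse).reverse
termination_by m w => m + w.length
decreasing_by
  · have := wordS_length_lt hw; omega
  · (try simp [List.length_reverse]) <;> omega

/-- The word function `h_m` (`m ≥ 2`): `h₂(w)` is the first letter of `w`, and
`h_m(w) = h_m(s(w)) · σ(w) · h̄_{m-1}(w)` for `m ≥ 3`. -/
def hW {X : Type*} [DecidableEq X] : ℕ → List X → List X :=
  tW fun w => w.take 1

/-- The word function `i_m` (`m ≥ 2`): `i₂(w)` is the initial part of `w`, and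
`i_m(w) = i_m(s(w)) · σ(w) · ī_{m-1}(w)` for `m ≥ 3`. -/
def iW {X : Type*} [DecidableEq X] : ℕ → List X → List X :=
  tW initPart

/-! ### Operations induced by words -/

/-- Evaluation of a word `w` over the alphabet `X` in a semigroup `S` under the
assignment `a : X → S`, computed in the monoid `WithOne S` (so that the empty word
evaluates to `1` and a nonempty word to the coercion of its value in `S`). -/
def evalW {X S : Type*} [Semigroup S] (a : X → S) (w : List X) : WithOne S :=
  (w.map fun t => (a t : WithOne S)).prod

/-- The identification minor `f_{i j}` of an `n`-ary operation: the `i`-th argument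
is replaced by the `j`-th. -/
def minor {α β : Type*} {n : ℕ} (f : (Fin n → α) → β) (i j : Fin n) :
    (Fin n → α) → β :=
  fun a => f (Function.update a i (a j))

/-- `f` depends on its `i`-th variable. -/
def DependsOnVar {α β : Type*} {n : ℕ} (f : (Fin n → α) → β) (i : Fin n) : Prop :=
  ∃ a b : Fin n → α, (∀ k : Fin n, k ≠ i → a k = b k) ∧ f a ≠ f b

/-- `f : Sⁿ → S` is induced by a (nonempty) word over `X_n = {x_1, …, x_n}`. -/
def InducedByWord {S : Type*} [Semigroup S] {n : ℕ} (f : (Fin n → S) → S) : Prop :=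
  ∃ w : List (Fin n), w ≠ [] ∧ ∀ a : Fin n → S, (f a : WithOne S) = evalW a w

section GPaux

variable {X : Type*} [DecidableEq X]

lemma GP.sup_lt {w : List X} (hw : w ≠ []) :
    (w.toFinset.sup fun x => w.idxOf x) < w.length := by
  have hpos : 0 < w.length := List.length_pos_iff.mpr hw
  rw [Finset.sup_lt_iff hpos]
  intro x hx
  exact List.idxOf_lt_length_iff.mpr (List.mem_toFinset.mp hx)

lemma GP.indexOf_getElem_le {l : List X} {i : ℕ} (h : i < l.length) :
    l.idxOf l[i] ≤ i := by
  induction l generalizing i with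
  | nil => simp at h
  | cons a t ih =>
    cases i with
    | zero => simp
    | succ n =>
      have hn : n < t.length := by simpa using h
      rw [List.getElem_cons_succ]
      by_cases hax : a = t[n]
      · rw [List.idxOf_cons_eq t hax]; omega
      · rw [List.idxOf_cons_ne t hax]
        have := ih hn
        omega

lemma GP.mem_take_of_indexOf_lt {l : List X} {y : X} {n : ℕ}
    (hy : y ∈ l) (h : l.idxOf y < n) : y ∈ l.take n := by
  have hlt := List.idxOf_lt_length_iff.mpr hy
  have hlen : l.idxOf y < (l.take n).length := by
    simp only [List.length_take]; omega
  have : (l.take n)[l.idxOf y] = y := by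
    rw [List.getElem_take]; exact List.getElem_idxOf hlt
  exact this ▸ List.getElem_mem hlen

lemma GP.indexOf_lt_of_mem_take {l : List X} {y : X} {n : ℕ}
    (hy : y ∈ l.take n) : l.idxOf y < n := by
  obtain ⟨i, hi, hiy⟩ := List.getElem_of_mem hy
  have hin : i < n := by simp only [List.length_take] at hi; omega
  have hil : i < l.length := by simp only [List.length_take] at hi; omega
  have : l[i] = y := by rw [← hiy]; exact List.getElem_take.symm
  calc l.idxOf y = l.idxOf l[i] := by rw [this]
    _ ≤ i := GP.indexOf_getElem_le hil
    _ < n := hin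

/-- Decomposition of a nonempty word: `σ(w)` is a single letter not occurring in
`s(w)`, and `c(s(w)) = c(w) \ {σ(w)}`. -/
lemma GP.decomp {w : List X} (hw : w ≠ []) :
    ∃ σ : X, wordSigma w = [σ] ∧ σ ∉ wordS w ∧
      (wordS w).toFinset = w.toFinset.erase σ ∧ σ ∈ w ∧
      w.idxOf σ = (w.toFinset.sup fun x => w.idxOf x) := by
  set k := (w.toFinset.sup fun x => w.idxOf x) with hkdef
  have hklt : k < w.length := GP.sup_lt hw
  have hne : w.toFinset.Nonempty := by
    simpa [List.toFinset_nonempty_iff] using hw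
  obtain ⟨x, hx, hxk⟩ := Finset.exists_mem_eq_sup w.toFinset hne fun x => w.idxOf x
  have hxmem : x ∈ w := List.mem_toFinset.mp hx
  have hxlt : w.idxOf x < w.length := List.idxOf_lt_length_iff.mpr hxmem
  refine ⟨x, ?_, ?_, ?_, hxmem, hxk.symm⟩
  · -- wordSigma w = [x]
    have hdrop : w.drop k = w[k] :: w.drop (k + 1) := List.drop_eq_getElem_cons hklt
    have hgk : w[k] = x := by
      have := List.getElem_idxOf hxlt
      rw [← this]
      congr 1
    rw [wordSigma, ← hkdef, hdrop, hgk, List.take_succ_cons, List.take_zero]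
  · -- x ∉ wordS w
    intro hxs
    have := GP.indexOf_lt_of_mem_take (n := k) (by simpa [wordS, hkdef] using hxs)
    omega
  · -- content of s(w)
    apply Finset.ext
    intro y
    simp only [Finset.mem_erase, List.mem_toFinset]
    constructor
    · intro hy
      have hyw : y ∈ w := List.mem_of_mem_take (by simpa [wordS, hkdef] using hy)
      refine ⟨?_, hyw⟩
      intro hyx
      subst hyx
      have := GP.indexOf_lt_of_mem_take (n := k) (by simpa [wordS, hkdef] using hy)
      omega
    · rintro ⟨hyx, hyw⟩
      have hylt : w.idxOf y < w.length := List.idxOf_lt_length_iff.mpr hyw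
      have hle : w.idxOf y ≤ k :=
        Finset.le_sup (f := fun x => w.idxOf x) (List.mem_toFinset.mpr hyw)
      have hlt : w.idxOf y < k := by
        rcases lt_or_eq_of_le hle with h' | h'
        · exact h'
        · exfalso; apply hyx
          have h1 := List.getElem_idxOf hylt
          have h2 := List.getElem_idxOf hxlt
          rw [← h1, ← h2]
          congr 1
          omega
      show y ∈ w.take k
      exact GP.mem_take_of_indexOf_lt hyw hlt

/-- The defining equation of `tW`, as an unconditional rewrite. -/
lemma GP.tW_eq (base : List X → List X) (m : ℕ) (w : List X) :
    tW base m w = if w = [] then []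
      else if m ≤ 2 then base w
      else tW base m (wordS w) ++ wordSigma w ++ (tW base (m - 1) w.reverse).reverse := by
  rw [tW]
  by_cases hw : w = [] <;> by_cases hm : m ≤ 2 <;> simp [hw, hm]

lemma GP.hW_eq (m : ℕ) (w : List X) :
    hW m w = if w = [] then []
      else if m ≤ 2 then w.take 1
      else hW m (wordS w) ++ wordSigma w ++ (hW (m - 1) w.reverse).reverse :=
  GP.tW_eq _ m w

lemma GP.hW_subset :
    ∀ N m (w : List X), m + w.length ≤ N → ∀ x ∈ hW m w, x ∈ w := by
  intro N
  induction N with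
  | zero =>
    intro m w hle x hx
    have hw : w = [] := List.length_eq_zero_iff.mp (by omega)
    rw [GP.hW_eq, if_pos hw] at hx
    simp at hx
  | succ n ih =>
    intro m w hle x hx
    rw [GP.hW_eq] at hx
    by_cases hw : w = []
    · rw [if_pos hw] at hx; simp at hx
    rw [if_neg hw] at hx
    by_cases hm : m ≤ 2
    · rw [if_pos hm] at hx
      exact List.mem_of_mem_take hx
    rw [if_neg hm] at hx
    simp only [List.mem_append, List.mem_reverse] at hx
    rcases hx with (hx | hx) | hx
    · have h1 : x ∈ wordS w := by
        refine ih m (wordS w) ?_ x hx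
        have := wordS_length_lt hw
        omega
      exact List.mem_of_mem_take (by simpa [wordS] using h1)
    · have h1 : x ∈ (w.drop (w.toFinset.sup fun x => w.idxOf x)) :=
        List.mem_of_mem_take (by simpa [wordSigma] using hx)
      exact List.mem_of_mem_drop h1
    · have h1 : x ∈ w.reverse := by
        refine ih (m - 1) w.reverse ?_ x hx
        simp only [List.length_reverse]
        omega
      simpa using h1

/-- For `m ≥ 3`, the content of `h_m(w)` equals the content of `w`. -/
lemma GP.hW_toFinset {m : ℕ} (hm : 3 ≤ m) :
    ∀ N (w : List X), w.length ≤ N → (hW m w).toFinset = w.toFinset := by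
  intro N
  induction N with
  | zero =>
    intro w hlen
    have hw : w = [] := List.length_eq_zero_iff.mp (by omega)
    rw [hw, GP.hW_eq, if_pos rfl]
  | succ n ih =>
    intro w hlen
    by_cases hw : w = []
    · rw [hw, GP.hW_eq, if_pos rfl]
    obtain ⟨σ, hσeq, hσnot, hS, hσmem, -⟩ := GP.decomp hw
    rw [GP.hW_eq, if_neg hw, if_neg (by omega : ¬ m ≤ 2), hσeq]
    have hIH : (hW m (wordS w)).toFinset = (wordS w).toFinset := by
      refine ih (wordS w) ?_
      have := wordS_length_lt hw
      omega
    have hsub : ∀ x ∈ (hW (m - 1) w.reverse).reverse.toFinset, x ∈ w.toFinset := by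
      intro x hx
      rw [List.mem_toFinset, List.mem_reverse] at hx
      have := GP.hW_subset ((m - 1) + w.reverse.length) (m - 1) w.reverse le_rfl x hx
      rw [List.mem_reverse] at this
      exact List.mem_toFinset.mpr this
    apply Finset.ext
    intro y
    simp only [List.toFinset_append, Finset.mem_union, hIH, hS, Finset.mem_erase,
      List.toFinset_cons, List.toFinset_nil, insert_empty_eq, Finset.mem_singleton,
      List.mem_toFinset]
    constructor
    · rintro ((⟨-, hy⟩ | hy) | hy)
      · exact hy
      · subst hy; exact hσmem
      · exact List.mem_toFinset.mp (hsub y (List.mem_toFinset.mpr hy))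
    · intro hy
      by_cases hyσ : y = σ
      · exact Or.inl (Or.inr hyσ)
      · exact Or.inl (Or.inl ⟨hyσ, hy⟩)

/-- For `m ≥ 3` and nonempty `w`, `s(h_m(w)) = h_m(s(w))`. -/
lemma GP.wordS_hW {m : ℕ} (hm : 3 ≤ m) {w : List X} (hw : w ≠ []) :
    wordS (hW m w) = hW m (wordS w) := by
  obtain ⟨σ, hσeq, hσnot, hS, hσmem, -⟩ := GP.decomp hw
  set p := hW m (wordS w) with hp
  set r := (hW (m - 1) w.reverse).reverse with hr
  have hweq : hW m w = p ++ [σ] ++ r := by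
    rw [GP.hW_eq, if_neg hw, if_neg (by omega : ¬ m ≤ 2), hσeq]
  have hcw : (hW m w).toFinset = w.toFinset := GP.hW_toFinset hm w.length w le_rfl
  have hcp : p.toFinset = (wordS w).toFinset :=
    GP.hW_toFinset hm (wordS w).length (wordS w) le_rfl
  have hσp : σ ∉ p := by
    intro hmem
    apply hσnot
    have : σ ∈ p.toFinset := List.mem_toFinset.mpr hmem
    rw [hcp, List.mem_toFinset] at this
    exact this
  have hidxσ : (hW m w).idxOf σ = p.length := by
    rw [hweq, List.append_assoc, List.idxOf_append_of_notMem hσp]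
    simp [List.idxOf_cons]
  have hsup : ((hW m w).toFinset.sup fun x => (hW m w).idxOf x) = p.length := by
    apply le_antisymm
    · apply Finset.sup_le
      intro x hx
      rw [hcw] at hx
      by_cases hxσ : x = σ
      · subst hxσ; rw [hidxσ]
      · have hxS : x ∈ (wordS w).toFinset := by
          rw [hS]; exact Finset.mem_erase.mpr ⟨hxσ, hx⟩
        have hxp : x ∈ p := List.mem_toFinset.mp (hcp ▸ hxS)
        have : (hW m w).idxOf x = p.idxOf x := by
          rw [hweq, List.append_assoc, List.idxOf_append_of_mem hxp]
        rw [this]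
        exact le_of_lt (List.idxOf_lt_length_iff.mpr hxp)
    · rw [← hidxσ]
      exact Finset.le_sup (f := fun x => (hW m w).idxOf x)
        (show σ ∈ (hW m w).toFinset by rw [hcw]; exact List.mem_toFinset.mpr hσmem)
  rw [wordS, hsup, hweq, List.append_assoc]
  exact List.take_left

lemma GP.wordS_ne_nil {w : List X} (hw : 2 ≤ w.toFinset.card) : wordS w ≠ [] := by
  have hwne : w ≠ [] := by
    intro h; subst h; simp at hw
  obtain ⟨a, ha, b, hb, hab⟩ := Finset.one_lt_card.mp hw
  have hk : 1 ≤ (w.toFinset.sup fun x => w.idxOf x) := by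
    by_contra hcon
    push_neg at hcon
    have h0 : ∀ x ∈ w.toFinset, w.idxOf x < 1 := fun x hx =>
      lt_of_le_of_lt (Finset.le_sup (f := fun x => w.idxOf x) hx) hcon
    have ha1 : a ∈ w.take 1 :=
      GP.mem_take_of_indexOf_lt (List.mem_toFinset.mp ha) (h0 a ha)
    have hb1 : b ∈ w.take 1 :=
      GP.mem_take_of_indexOf_lt (List.mem_toFinset.mp hb) (h0 b hb)
    cases w with
    | nil => exact hwne rfl
    | cons c t =>
      simp only [List.take_succ_cons, List.take_zero, List.mem_singleton] at ha1 hb1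
      exact hab (ha1.trans hb1.symm)
  intro hnil
  have := congrArg List.length hnil
  rw [wordS, List.length_take, List.length_nil] at this
  have hlen : 0 < w.length := List.length_pos_iff.mpr hwne
  omega

end GPaux

/-- If `m ≥ 2` and `u, v` are words each containing at least two
distinct letters, then `h_m(u) = h_m(v)` implies `h_m(s(u)) = h_m(s(v))`; i.e. if
the band variety `𝒜_m` satisfies `u ≈ v` then it satisfies `s(u) ≈ s(v)`. -/
theorem hW_s_of_hW {X : Type*} [DecidableEq X] (m : ℕ) (hm : 2 ≤ m)
    (u v : List X) (hu : 2 ≤ u.toFinset.card) (hv : 2 ≤ v.toFinset.card)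
    (h : hW m u = hW m v) :
    hW m (wordS u) = hW m (wordS v) := by
  have hune : u ≠ [] := by intro h; subst h; simp at hu
  have hvne : v ≠ [] := by intro h; subst h; simp at hv
  rcases eq_or_lt_of_le hm with hm2 | hm3
  · -- m = 2
    subst hm2
    have key : ∀ w : List X, 2 ≤ w.toFinset.card → hW 2 (wordS w) = w.take 1 := by
      intro w hw
      have hwne : w ≠ [] := by intro h; subst h; simp at hw
      rw [GP.hW_eq, if_neg (GP.wordS_ne_nil hw), if_pos le_rfl]
      show (w.take _).take 1 = w.take 1
      rw [List.take_take]
      congr 1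
      have h1 : 1 ≤ (w.toFinset.sup fun x => w.idxOf x) := by
        by_contra hcon
        push_neg at hcon
        apply GP.wordS_ne_nil hw
        rw [wordS, Nat.lt_one_iff.mp hcon, List.take_zero]
      omega
    rw [key u hu, key v hv]
    rw [GP.hW_eq, if_neg hune, if_pos le_rfl] at h
    rw [GP.hW_eq, if_neg hvne, if_pos le_rfl] at h
    exact h
  · -- 3 ≤ m
    rw [← GP.wordS_hW hm3 hune, ← GP.wordS_hW hm3 hvne, h]
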